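/- The drop in mutual information caused by a projective measurement on B equals the measurement-dependent discord: I(A:B) − I(A':B') = S̃_{π}(A|B) − S(A|B), where ρ'_AB = Σ_j (I⊗π_j)ρ_AB(I⊗π_j) and S̃_{π}(A|B) = Σ_j p_j S(ρ_{A|j}). -/

import Mathlib

open scoped BigOperators Kronecker ComplexOrder
open Matrix

noncomputable section

/-- `-(x log₂ x)`, the summand of Shannon entropy. -/
def negxlog (x : ℝ) : ℝ := -(x * Real.logb 2 x)

/-- Von Neumann entropy (base-2) of a matrix, via the eigenvalues of a Hermitian matrix. -/
def vnEntropy {n : Type*} [Fintype n] [DecidableEq n] (ρ : Matrix n n ℂ) : ℝ :=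
  if h : ρ.IsHermitian then ∑ i, negxlog (h.eigenvalues i) else 0

/-- A density operator: positive semidefinite with unit trace. -/
def IsDensity {n : Type*} [Fintype n] [DecidableEq n] (ρ : Matrix n n ℂ) : Prop :=
  ρ.PosSemidef ∧ ρ.trace = 1

/-- Partial trace over the second factor. -/
def trB {α β : Type*} [Fintype β] (ρ : Matrix (α × β) (α × β) ℂ) : Matrix α α ℂ :=
  fun i j => ∑ k, ρ (i, k) (j, k)

/-- Partial trace over the first factor. -/
def trA {α β : Type*} [Fintype α] (ρ : Matrix (α × β) (α × β) ℂ) : Matrix β β ℂ :=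
  fun i j => ∑ k, ρ (k, i) (k, j)

/-- Partial trace over the third factor of a tripartite system `α × (β × γ)`. -/
def trC3 {α β γ : Type*} [Fintype γ] (ρ : Matrix (α × β × γ) (α × β × γ) ℂ) :
    Matrix (α × β) (α × β) ℂ :=
  fun i j => ∑ k, ρ (i.1, (i.2, k)) (j.1, (j.2, k))

/-- Partial trace over the second factor of a tripartite system `α × (β × γ)`. -/
def trB3 {α β γ : Type*} [Fintype β] (ρ : Matrix (α × β × γ) (α × β × γ) ℂ) :
    Matrix (α × γ) (α × γ) ℂ :=
  fun i j => ∑ k, ρ (i.1, (k, i.2)) (j.1, (k, j.2))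

/-- Partial trace over the first and third factors of a tripartite system `α × (β × γ)`. -/
def trAC3 {α β γ : Type*} [Fintype α] [Fintype γ] (ρ : Matrix (α × β × γ) (α × β × γ) ℂ) :
    Matrix β β ℂ :=
  fun i j => ∑ k : α, ∑ l : γ, ρ (k, (i, l)) (k, (j, l))

/-- A family of vectors is orthonormal. -/
def OrthonormalFam {ι β : Type*} [Fintype β] [DecidableEq ι] (e : ι → β → ℂ) : Prop :=
  ∀ i j, (∑ x, (starRingEnd ℂ) (e i x) * e j x) = if i = j then 1 else 0

/-- The rank-one operator `|v⟩⟨v|`. -/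
def projKet {β : Type*} (v : β → ℂ) : Matrix β β ℂ :=
  Matrix.vecMulVec v (star v)

/-- An orthonormal basis of `β`: an orthonormal family which is complete. -/
def IsONB {β : Type*} [Fintype β] [DecidableEq β] (e : β → β → ℂ) : Prop :=
  OrthonormalFam e ∧ (∑ j, projKet (e j)) = 1

/-- The operator `(I_A ⊗ ⟨v|) ρ (I_A ⊗ |w⟩)` on `A`. -/
def condOp2 {α β : Type*} [Fintype α] [Fintype β]
    (ρ : Matrix (α × β) (α × β) ℂ) (v w : β → ℂ) : Matrix α α ℂ :=
  fun i j => ∑ x, ∑ y, (starRingEnd ℂ) (v x) * ρ (i, x) (j, y) * w y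

/-- The unnormalized conditional operator `(I_A ⊗ ⟨v|) ρ (I_A ⊗ |v⟩)`. -/
def condOp {α β : Type*} [Fintype α] [Fintype β]
    (ρ : Matrix (α × β) (α × β) ℂ) (v : β → ℂ) : Matrix α α ℂ :=
  condOp2 ρ v v

/-- Outcome probability `p = Tr(ρ (I ⊗ |v⟩⟨v|))`. -/
def prob {α β : Type*} [Fintype α] [Fintype β]
    (ρ : Matrix (α × β) (α × β) ℂ) (v : β → ℂ) : ℝ :=
  (Matrix.trace (condOp ρ v)).re

/-- Normalized conditional state `ρ_{A|v}`. -/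
def condState {α β : Type*} [Fintype α] [Fintype β]
    (ρ : Matrix (α × β) (α × β) ℂ) (v : β → ℂ) : Matrix α α ℂ :=
  (prob ρ v)⁻¹ • condOp ρ v

/-- Measured (average) conditional entropy `Σ_i p_i S(ρ_{A|i})` for rank-one elements `|v i⟩⟨v i|`. -/
def measCondEnt {α β ι : Type*} [Fintype α] [Fintype β] [DecidableEq α]
    [Fintype ι] (ρ : Matrix (α × β) (α × β) ℂ) (v : ι → β → ℂ) : ℝ :=
  ∑ i, prob ρ (v i) * vnEntropy (condState ρ (v i))

/-- Quantum conditional entropy `S(A|B) = S(ρ_AB) - S(ρ_B)`. -/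
def condEnt {α β : Type*} [Fintype α] [Fintype β] [DecidableEq α] [DecidableEq β]
    (ρ : Matrix (α × β) (α × β) ℂ) : ℝ :=
  vnEntropy ρ - vnEntropy (trA ρ)

/-- Quantum mutual information `I(A:B) = S(ρ_A) + S(ρ_B) - S(ρ_AB)`. -/
def mutualInfo {α β : Type*} [Fintype α] [Fintype β] [DecidableEq α] [DecidableEq β]
    (ρ : Matrix (α × β) (α × β) ℂ) : ℝ :=
  vnEntropy (trB ρ) + vnEntropy (trA ρ) - vnEntropy ρ

/-- Quantum discord `D(A:B) = inf over rank-1 POVMs of S̃(A|B) - S(A|B)`. -/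
def discord (α β : Type*) [Fintype α] [Fintype β] [DecidableEq α] [DecidableEq β]
    (ρ : Matrix (α × β) (α × β) ℂ) : ℝ :=
  sInf { r : ℝ | ∃ (n : ℕ) (v : Fin n → β → ℂ),
      (∑ i, projKet (v i)) = 1 ∧ r = measCondEnt ρ v } - condEnt ρ

/-- A POVM: positive semidefinite elements summing to the identity. -/
def IsPOVM {β ι : Type*} [Fintype β] [DecidableEq β] [Fintype ι]
    (M : ι → Matrix β β ℂ) : Prop :=
  (∀ i, (M i).PosSemidef) ∧ (∑ i, M i) = 1

/-- Outcome probability for a general POVM element. -/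
def povmProb {α β : Type*} [Fintype α] [Fintype β] [DecidableEq α] [DecidableEq β]
    (ρ : Matrix (α × β) (α × β) ℂ) (M : Matrix β β ℂ) : ℝ :=
  (Matrix.trace (trB (ρ * ((1 : Matrix α α ℂ) ⊗ₖ M)))).re

/-- Normalized conditional state for a general POVM element. -/
def povmCondState {α β : Type*} [Fintype α] [Fintype β] [DecidableEq α] [DecidableEq β]
    (ρ : Matrix (α × β) (α × β) ℂ) (M : Matrix β β ℂ) : Matrix α α ℂ :=
  (povmProb ρ M)⁻¹ • trB (ρ * ((1 : Matrix α α ℂ) ⊗ₖ M))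

/-- Measured conditional entropy for a general POVM. -/
def povmMCE {α β ι : Type*} [Fintype α] [Fintype β] [DecidableEq α] [DecidableEq β]
    [Fintype ι] (ρ : Matrix (α × β) (α × β) ℂ) (M : ι → Matrix β β ℂ) : ℝ :=
  ∑ i, povmProb ρ (M i) * vnEntropy (povmCondState ρ (M i))

end

noncomputable section MDAux
open Polynomial Matrix

namespace MDAux

variable {n : Type*} [Fintype n] [DecidableEq n]

lemma charmatrix_diagonal (d : n → ℂ) :
    charmatrix (Matrix.diagonal d) = Matrix.diagonal (fun i => (X : ℂ[X]) - C (d i)) := by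
  ext i j
  by_cases h : i = j
  · subst h; simp [charmatrix_apply_eq]
  · simp [charmatrix_apply_ne _ _ _ h, Matrix.diagonal_apply_ne _ h]

lemma charpoly_diagonal (d : n → ℂ) :
    (Matrix.diagonal d).charpoly = ∏ i, ((X : ℂ[X]) - C (d i)) := by
  rw [Matrix.charpoly, charmatrix_diagonal, Matrix.det_diagonal]

lemma charmatrix_eq (M : Matrix n n ℂ) :
    charmatrix M = Matrix.diagonal (fun _ => (X : ℂ[X])) - M.map C := by
  ext i j
  rw [charmatrix_apply]
  rfl

lemma charpoly_conj (U A Vm : Matrix n n ℂ) (hUV : U * Vm = 1) :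
    (U * A * Vm).charpoly = A.charpoly := by
  have hdiag : ∀ (B : Matrix n n ℂ[X]), Matrix.diagonal (fun _ : n => (X : ℂ[X])) * B
      = B * Matrix.diagonal (fun _ : n => (X : ℂ[X])) := by
    intro B
    apply Matrix.ext
    intro i j
    rw [Matrix.diagonal_mul, Matrix.mul_diagonal, mul_comm]
  have hmain : charmatrix (U * A * Vm) = (U.map C) * charmatrix A * (Vm.map C) := by
    rw [charmatrix_eq, charmatrix_eq, Matrix.mul_sub, Matrix.sub_mul]
    congr 1
    · rw [← hdiag (U.map C), Matrix.mul_assoc, ← Matrix.map_mul, hUV]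
      simp
    · rw [← Matrix.map_mul, ← Matrix.map_mul]
  have hdet : (U.map (C : ℂ →+* ℂ[X])).det * (Vm.map (C : ℂ →+* ℂ[X])).det = 1 := by
    rw [← Matrix.det_mul, ← Matrix.map_mul, hUV]
    simp
  rw [Matrix.charpoly, Matrix.charpoly, hmain, Matrix.det_mul, Matrix.det_mul]
  calc (U.map C).det * (charmatrix A).det * (Vm.map C).det
      = (charmatrix A).det * ((U.map C).det * (Vm.map C).det) := by ring
    _ = (charmatrix A).det := by rw [hdet, mul_one]

lemma charpoly_blockDiagonal {m o : Type*} [Fintype m] [DecidableEq m] [Fintype o]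
    [DecidableEq o] (M : o → Matrix m m ℂ) :
    (Matrix.blockDiagonal M).charpoly = ∏ k, (M k).charpoly := by
  have h : charmatrix (Matrix.blockDiagonal M)
      = Matrix.blockDiagonal (fun k => charmatrix (M k)) := by
    simp only [charmatrix_eq]
    apply Matrix.ext
    rintro ⟨i, k⟩ ⟨j, k'⟩
    by_cases hk : k = k'
    · subst hk
      by_cases hij : i = j
      · subst hij; simp [Matrix.blockDiagonal_apply, Matrix.diagonal_apply_eq]
      · simp [Matrix.blockDiagonal_apply, Matrix.diagonal_apply_ne,
          Prod.ext_iff, hij]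
    · simp [Matrix.blockDiagonal_apply, hk, Matrix.diagonal_apply_ne, Prod.ext_iff]
  rw [Matrix.charpoly, h, Matrix.det_blockDiagonal]
  rfl

lemma charpoly_hermitian {A : Matrix n n ℂ} (hA : A.IsHermitian) :
    A.charpoly = ∏ i, ((X : ℂ[X]) - C ((hA.eigenvalues i : ℝ) : ℂ)) := by
  have hu1 : (hA.eigenvectorUnitary : Matrix n n ℂ) * (star hA.eigenvectorUnitary : Matrix n n ℂ) = 1 := by
    exact_mod_cast hA.eigenvectorUnitary.2.2
  conv_lhs => rw [hA.spectral_theorem, Unitary.conjStarAlgAut_apply]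
  rw [charpoly_conj _ _ _ hu1, charpoly_diagonal]
  rfl

lemma eig_multiset_eq {ι : Type*} [Fintype ι] {A : Matrix n n ℂ} (hA : A.IsHermitian)
    (d : ι → ℝ) (h : A.charpoly = ∏ i, ((X : ℂ[X]) - C ((d i : ℝ) : ℂ))) :
    (Finset.univ.val.map hA.eigenvalues) = (Finset.univ.val.map d) := by
  have h1 : A.charpoly = ∏ i, ((X : ℂ[X]) - C ((hA.eigenvalues i : ℝ) : ℂ)) :=
    charpoly_hermitian hA
  have h2 : ((Finset.univ.val.map (fun i => ((hA.eigenvalues i : ℝ) : ℂ))).map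
        (fun a => (X : ℂ[X]) - C a)).prod
      = ((Finset.univ.val.map (fun i => ((d i : ℝ) : ℂ))).map
        (fun a => (X : ℂ[X]) - C a)).prod := by
    simp only [Multiset.map_map, Function.comp]
    rw [← Finset.prod_eq_multiset_prod, ← Finset.prod_eq_multiset_prod, ← h1, ← h]
  have h3 := congrArg Polynomial.roots h2
  rw [Polynomial.roots_multiset_prod_X_sub_C, Polynomial.roots_multiset_prod_X_sub_C] at h3
  have h4 : (Finset.univ.val.map hA.eigenvalues).map (fun r : ℝ => (r : ℂ))
      = (Finset.univ.val.map d).map (fun r : ℝ => (r : ℂ)) := by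
    simpa [Multiset.map_map, Function.comp] using h3
  exact Multiset.map_injective Complex.ofReal_injective h4

lemma sum_f_eig {ι : Type*} [Fintype ι] {A : Matrix n n ℂ} (hA : A.IsHermitian)
    (d : ι → ℝ) (h : A.charpoly = ∏ i, ((X : ℂ[X]) - C ((d i : ℝ) : ℂ)))
    (f : ℝ → ℝ) : ∑ i, f (hA.eigenvalues i) = ∑ i, f (d i) := by
  have h5 := congrArg (fun s : Multiset ℝ => (s.map f).sum) (eig_multiset_eq hA d h)
  simp only [Multiset.map_map, Function.comp] at h5
  exact h5

lemma vnEntropy_eq {ι : Type*} [Fintype ι] {A : Matrix n n ℂ} (hA : A.IsHermitian)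
    (d : ι → ℝ) (h : A.charpoly = ∏ i, ((X : ℂ[X]) - C ((d i : ℝ) : ℂ))) :
    vnEntropy A = ∑ i, negxlog (d i) := by
  rw [vnEntropy, dif_pos hA]
  exact sum_f_eig hA d h negxlog

lemma sum_eig_eq_trace {A : Matrix n n ℂ} (hA : A.IsHermitian) :
    ((∑ i, hA.eigenvalues i : ℝ) : ℂ) = A.trace := by
  have hu1 : (star hA.eigenvectorUnitary : Matrix n n ℂ) * (hA.eigenvectorUnitary : Matrix n n ℂ) = 1 := by
    exact_mod_cast hA.eigenvectorUnitary.2.1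
  conv_rhs => rw [hA.spectral_theorem, Unitary.conjStarAlgAut_apply]
  rw [Matrix.trace_mul_cycle, hu1, Matrix.one_mul, Matrix.trace_diagonal]
  push_cast
  rfl

end MDAux

end MDAux

section MDAux2
open Polynomial Matrix MDAux

variable {α β : Type*} [Fintype α] [Fintype β] [DecidableEq α] [DecidableEq β]

lemma condOp_psd {ρ : Matrix (α × β) (α × β) ℂ} (hρ : ρ.PosSemidef) (v : β → ℂ) :
    (condOp ρ v).PosSemidef := by
  have h := hρ.conjTranspose_mul_mul_same
    (Matrix.of (fun (p : α × β) (j : α) => if p.1 = j then v p.2 else 0))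
  have heq : (Matrix.of (fun (p : α × β) (j : α) => if p.1 = j then v p.2 else 0))ᴴ * ρ *
      (Matrix.of (fun (p : α × β) (j : α) => if p.1 = j then v p.2 else 0)) = condOp ρ v := by
    apply Matrix.ext
    intro i j
    simp only [condOp, condOp2, Matrix.mul_apply, Matrix.conjTranspose_apply,
      Matrix.of_apply, Fintype.sum_prod_type, ite_mul, mul_ite, zero_mul, mul_zero,
      apply_ite star, star_zero, starRingEnd_apply, Finset.sum_ite_eq,
      Finset.sum_ite_eq', Finset.mem_univ, if_true]
    simp [Finset.sum_ite_eq, Finset.sum_ite_eq', ite_mul, zero_mul]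
    rw [Finset.sum_comm]
    refine Finset.sum_congr rfl fun x _ => ?_
    rw [Finset.sum_mul]
  rwa [heq] at h

lemma prob_eq_sum_eig {ρ : Matrix (α × β) (α × β) ℂ} (hρ : ρ.PosSemidef) (v : β → ℂ) :
    prob ρ v = ∑ a, (condOp_psd hρ v).isHermitian.eigenvalues a := by
  have h := sum_eig_eq_trace (condOp_psd hρ v).isHermitian
  rw [prob, ← h, Complex.ofReal_re]

lemma trace_condOp_eq {ρ : Matrix (α × β) (α × β) ℂ} (hρ : ρ.PosSemidef) (v : β → ℂ) :
    (condOp ρ v).trace = ((prob ρ v : ℝ) : ℂ) := by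
  rw [prob_eq_sum_eig hρ v, sum_eig_eq_trace]

lemma vnE_condState {ρ : Matrix (α × β) (α × β) ℂ} (hρ : ρ.PosSemidef) (v : β → ℂ)
    (hp : prob ρ v ≠ 0) :
    vnEntropy (condState ρ v)
      = ∑ a, negxlog ((prob ρ v)⁻¹ * (condOp_psd hρ v).isHermitian.eigenvalues a) := by
  have h := (condOp_psd hρ v).isHermitian
  have hu1 : (h.eigenvectorUnitary : Matrix α α ℂ) * (star h.eigenvectorUnitary : Matrix α α ℂ) = 1 := by
    exact_mod_cast h.eigenvectorUnitary.2.2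
  have hdiag : Matrix.diagonal (fun a => (((prob ρ v)⁻¹ * h.eigenvalues a : ℝ) : ℂ))
      = (prob ρ v)⁻¹ • Matrix.diagonal (RCLike.ofReal ∘ h.eigenvalues) := by
    apply Matrix.ext
    intro a b
    rw [Matrix.smul_apply]
    by_cases hab : a = b
    · subst hab
      simp [Matrix.diagonal_apply_eq, Complex.real_smul]
    · simp [Matrix.diagonal_apply_ne _ hab]
  have hform : condState ρ v
      = (h.eigenvectorUnitary : Matrix α α ℂ) *
        Matrix.diagonal (fun a => (((prob ρ v)⁻¹ * h.eigenvalues a : ℝ) : ℂ)) *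
        (star h.eigenvectorUnitary : Matrix α α ℂ) := by
    rw [condState, hdiag]
    conv_lhs => rw [h.spectral_theorem, Unitary.conjStarAlgAut_apply]
    simp only [mul_smul_comm, smul_mul_assoc]
  have hherm : (condState ρ v).IsHermitian := by
    rw [hform]
    exact Matrix.isHermitian_mul_mul_conjTranspose _
      (Matrix.isHermitian_diagonal_of_self_adjoint _ (by
        funext a
        simp [Complex.conj_ofReal]))
  refine vnEntropy_eq hherm _ ?_
  rw [hform, charpoly_conj _ _ _ hu1, MDAux.charpoly_diagonal]

lemma negxlog_mul {p m : ℝ} (hp : p ≠ 0) (hm : m ≠ 0) :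
    negxlog (p * m) = p * negxlog m + m * negxlog p := by
  unfold negxlog
  rw [Real.logb_mul hp hm]
  ring

lemma negxlog_zero : negxlog 0 = 0 := by simp [negxlog]

lemma outcome_entropy {ρ : Matrix (α × β) (α × β) ℂ} (hρ : ρ.PosSemidef) (v : β → ℂ) :
    ∑ a, negxlog ((condOp_psd hρ v).isHermitian.eigenvalues a)
      = prob ρ v * vnEntropy (condState ρ v) + negxlog (prob ρ v) := by
  set lam := (condOp_psd hρ v).isHermitian.eigenvalues with hlam
  have hsum : ∑ a, lam a = prob ρ v := (prob_eq_sum_eig hρ v).symm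
  have hnn : ∀ a, 0 ≤ lam a := fun a => (condOp_psd hρ v).eigenvalues_nonneg a
  by_cases hp : prob ρ v = 0
  · have hz : ∀ a ∈ Finset.univ, lam a = 0 := by
      rw [← Finset.sum_eq_zero_iff_of_nonneg (fun a _ => hnn a), hsum, hp]
    rw [hp, negxlog_zero, zero_mul, add_zero]
    apply Finset.sum_eq_zero
    intro a ha
    rw [hz a ha, negxlog_zero]
  · have hvne := vnE_condState hρ v hp
    rw [hvne, Finset.mul_sum]
    have key : ∀ a, negxlog (lam a)
        = prob ρ v * negxlog ((prob ρ v)⁻¹ * lam a)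
          + ((prob ρ v)⁻¹ * lam a) * negxlog (prob ρ v) := by
      intro a
      by_cases hla : lam a = 0
      · simp [hla, negxlog_zero]
      · have : lam a = prob ρ v * ((prob ρ v)⁻¹ * lam a) := by
          field_simp
        conv_lhs => rw [this]
        exact negxlog_mul hp (by
          intro hcon
          apply hla
          field_simp at hcon
          simpa using hcon)
    calc ∑ a, negxlog (lam a)
        = ∑ a, (prob ρ v * negxlog ((prob ρ v)⁻¹ * lam a)
            + ((prob ρ v)⁻¹ * lam a) * negxlog (prob ρ v)) :=
          Finset.sum_congr rfl (fun a _ => key a)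
      _ = (∑ a, prob ρ v * negxlog ((prob ρ v)⁻¹ * lam a))
            + (∑ a, (prob ρ v)⁻¹ * lam a) * negxlog (prob ρ v) := by
          rw [Finset.sum_add_distrib, Finset.sum_mul]
      _ = (∑ a, prob ρ v * negxlog ((prob ρ v)⁻¹ * lam a)) + negxlog (prob ρ v) := by
          have hs2 : ∑ a, (prob ρ v)⁻¹ * lam a = 1 := by
            rw [← Finset.mul_sum, hsum, inv_mul_cancel₀ hp]
          rw [hs2, one_mul]

end MDAux2

open Polynomial MDAux

/-- the drop in mutual information equals the measurement-dependent discord. -/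
theorem mutualInfo_drop_eq_measured_discord
    {α β : Type*} [Fintype α] [Fintype β] [DecidableEq α] [DecidableEq β]
    (ρ : Matrix (α × β) (α × β) ℂ) (hρ : IsDensity ρ)
    (e : β → β → ℂ) (he : IsONB e)
    (ρ' : Matrix (α × β) (α × β) ℂ)
    (hρ' : ρ' = ∑ j, ((1 : Matrix α α ℂ) ⊗ₖ projKet (e j)) * ρ *
        ((1 : Matrix α α ℂ) ⊗ₖ projKet (e j))) :
    mutualInfo ρ - mutualInfo ρ' = measCondEnt ρ e - condEnt ρ := by
  classical
  obtain ⟨hpsd, -⟩ := hρ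
  have hcomp : ∀ x y : β, (∑ k, e k x * star (e k y)) = if x = y then 1 else 0 := by
    intro x y
    have h1 : (∑ j, projKet (e j)) x y = (1 : Matrix β β ℂ) x y := by rw [he.2]
    simpa [projKet, Matrix.vecMulVec_apply, Matrix.one_apply, Matrix.sum_apply,
      Pi.star_apply] using h1
  have hterm : ∀ (k : β) (i : α) (x : β) (j : α) (y : β),
      ((((1 : Matrix α α ℂ) ⊗ₖ projKet (e k)) * ρ *
        ((1 : Matrix α α ℂ) ⊗ₖ projKet (e k))) (i, x) (j, y))
      = e k x * star (e k y) * condOp ρ (e k) i j := by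
    intro k i x j y
    simp only [Matrix.mul_apply, Matrix.kroneckerMap_apply, Matrix.one_apply, projKet,
      Matrix.vecMulVec_apply, Pi.star_apply, Fintype.sum_prod_type, ite_mul, mul_ite,
      zero_mul, mul_zero, one_mul, Finset.sum_ite_eq, Finset.sum_ite_eq', Finset.mem_univ,
      if_true, condOp, condOp2, starRingEnd_apply]
    simp [Finset.sum_ite_eq, Finset.sum_ite_eq', ite_mul, zero_mul]
    simp only [Finset.mul_sum, Finset.sum_mul]
    rw [Finset.sum_comm]
    refine Finset.sum_congr rfl fun u _ => Finset.sum_congr rfl fun w _ => by ring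
  have hρ'app : ∀ (i : α) (x : β) (j : α) (y : β),
      ρ' (i, x) (j, y) = ∑ k, e k x * star (e k y) * condOp ρ (e k) i j := by
    intro i x j y
    rw [hρ', Matrix.sum_apply]
    exact Finset.sum_congr rfl fun k _ => hterm k i x j y
  set Vm : Matrix (α × β) (α × β) ℂ :=
    Matrix.of (fun pq qr : α × β => if pq.1 = qr.1 then e qr.2 pq.2 else 0) with hVm
  set D : Matrix (α × β) (α × β) ℂ := Matrix.blockDiagonal (fun k => condOp ρ (e k)) with hD
  have hVV : Vm * Vmᴴ = 1 := by
    apply Matrix.ext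
    rintro ⟨i, x⟩ ⟨j, y⟩
    simp only [hVm, Matrix.mul_apply, Matrix.conjTranspose_apply, Matrix.of_apply,
      Fintype.sum_prod_type, apply_ite star, star_zero, ite_mul, mul_ite, zero_mul,
      mul_zero]
    rw [Finset.sum_comm]
    simp only [Finset.sum_ite_eq, Finset.sum_ite_eq', Finset.mem_univ, if_true]
    by_cases hij : i = j
    · subst hij
      simp only [if_pos rfl, Matrix.one_apply, Prod.mk.injEq, true_and]
      rw [← hcomp x y]
      by_cases hxy : x = y <;> simp [hxy]
    · simp [Matrix.one_apply, Prod.ext_iff, hij]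
  have hρ'VD : ρ' = Vm * D * Vmᴴ := by
    apply Matrix.ext
    rintro ⟨i, x⟩ ⟨j, y⟩
    rw [hρ'app i x j y]
    simp only [hVm, hD, Matrix.mul_apply, Matrix.conjTranspose_apply, Matrix.of_apply,
      Matrix.blockDiagonal_apply, Fintype.sum_prod_type, apply_ite star, star_zero,
      ite_mul, mul_ite, zero_mul, mul_zero, Finset.sum_ite_eq, Finset.sum_ite_eq',
      Finset.mem_univ, if_true]
    rw [Finset.sum_comm]
    simp only [Finset.sum_ite_eq, Finset.sum_ite_eq', Finset.mem_univ, if_true]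
    refine Finset.sum_congr rfl fun k _ => by ring
  have hD' : D.IsHermitian := by
    have hfun : (fun k => (condOp ρ (e k))ᴴ) = (fun k => condOp ρ (e k)) :=
      funext fun k => (condOp_psd hpsd (e k)).isHermitian
    show Dᴴ = D
    rw [hD, Matrix.blockDiagonal_conjTranspose, hfun]
  have hρ'herm : ρ'.IsHermitian := by
    rw [hρ'VD]
    exact Matrix.isHermitian_mul_mul_conjTranspose Vm hD'
  have hcharρ' : ρ'.charpoly = ∏ pk : α × β,
      ((X : ℂ[X]) - C (((condOp_psd hpsd (e pk.2)).isHermitian.eigenvalues pk.1 : ℝ) : ℂ)) := by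
    rw [hρ'VD, charpoly_conj _ _ _ hVV, hD, charpoly_blockDiagonal]
    rw [Fintype.prod_prod_type]
    rw [Finset.prod_comm]
    exact Finset.prod_congr rfl fun k _ =>
      charpoly_hermitian (condOp_psd hpsd (e k)).isHermitian
  have hvnρ' : vnEntropy ρ' = (∑ k, prob ρ (e k) * vnEntropy (condState ρ (e k)))
      + ∑ k, negxlog (prob ρ (e k)) := by
    rw [vnEntropy_eq hρ'herm _ hcharρ', Fintype.sum_prod_type, Finset.sum_comm,
      ← Finset.sum_add_distrib]
    exact Finset.sum_congr rfl fun k _ => outcome_entropy hpsd (e k)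
  have htrB : trB ρ' = trB ρ := by
    apply Matrix.ext
    intro i j
    simp only [trB]
    calc ∑ x, ρ' (i, x) (j, x)
        = ∑ x, ∑ k, e k x * star (e k x) * condOp ρ (e k) i j :=
          Finset.sum_congr rfl fun x _ => hρ'app i x j x
      _ = ∑ k, (∑ x, e k x * star (e k x)) * condOp ρ (e k) i j := by
          rw [Finset.sum_comm]
          exact Finset.sum_congr rfl fun k _ => (Finset.sum_mul _ _ _).symm
      _ = ∑ k, condOp ρ (e k) i j := by
          refine Finset.sum_congr rfl fun k _ => ?_
          have h1 : (∑ x, e k x * star (e k x)) = 1 := by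
            have h2 : (∑ x, e k x * star (e k x)) = ∑ x, star (e k x) * e k x :=
              Finset.sum_congr rfl fun x _ => mul_comm _ _
            have h3 := he.1 k k
            simp only [starRingEnd_apply] at h3
            rw [h2, h3]
            simp
          rw [h1, one_mul]
      _ = ∑ x, ρ (i, x) (j, x) := by
          simp only [condOp, condOp2, starRingEnd_apply]
          calc ∑ k, ∑ u, ∑ w, star (e k u) * ρ (i, u) (j, w) * e k w
              = ∑ u, ∑ w, (∑ k, e k w * star (e k u)) * ρ (i, u) (j, w) := by
                rw [Finset.sum_comm]
                refine Finset.sum_congr rfl fun u _ => ?_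
                rw [Finset.sum_comm]
                refine Finset.sum_congr rfl fun w _ => ?_
                rw [Finset.sum_mul]
                refine Finset.sum_congr rfl fun k _ => by ring
            _ = ∑ u, ρ (i, u) (j, u) := by
                refine Finset.sum_congr rfl fun u _ => ?_
                calc ∑ w, (∑ k, e k w * star (e k u)) * ρ (i, u) (j, w)
                    = ∑ w, (if w = u then 1 else 0) * ρ (i, u) (j, w) :=
                      Finset.sum_congr rfl fun w _ => by rw [hcomp w u]
                  _ = ρ (i, u) (j, u) := by simp
  have htrA : trA ρ' = (Matrix.of fun (x k : β) => e k x) *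
      Matrix.diagonal (fun k => ((prob ρ (e k) : ℝ) : ℂ)) *
      (Matrix.of fun (x k : β) => e k x)ᴴ := by
    apply Matrix.ext
    intro x y
    have hL : trA ρ' x y = ∑ k, e k x * star (e k y) * ((prob ρ (e k) : ℝ) : ℂ) := by
      simp only [trA]
      calc ∑ i, ρ' (i, x) (i, y)
          = ∑ i, ∑ k, e k x * star (e k y) * condOp ρ (e k) i i :=
            Finset.sum_congr rfl fun i _ => hρ'app i x i y
        _ = ∑ k, e k x * star (e k y) * (condOp ρ (e k)).trace := by
            rw [Finset.sum_comm]
            refine Finset.sum_congr rfl fun k _ => ?_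
            rw [Matrix.trace, Finset.mul_sum]
            rfl
        _ = ∑ k, e k x * star (e k y) * ((prob ρ (e k) : ℝ) : ℂ) :=
            Finset.sum_congr rfl fun k _ => by rw [trace_condOp_eq hpsd]
    rw [hL]
    simp only [Matrix.mul_apply, Matrix.mul_diagonal, Matrix.conjTranspose_apply,
      Matrix.of_apply, Matrix.diagonal_apply, mul_ite, ite_mul, mul_zero, zero_mul,
      Finset.sum_ite_eq, Finset.sum_ite_eq', Finset.mem_univ, if_true]
    exact Finset.sum_congr rfl fun k _ => by ring
  have hW : (Matrix.of fun (x k : β) => e k x) * (Matrix.of fun (x k : β) => e k x)ᴴ = 1 := by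
    apply Matrix.ext
    intro x y
    simp only [Matrix.mul_apply, Matrix.conjTranspose_apply, Matrix.of_apply,
      Matrix.one_apply]
    exact hcomp x y
  have hvntrA : vnEntropy (trA ρ') = ∑ k, negxlog (prob ρ (e k)) := by
    have hherm : (trA ρ').IsHermitian := by
      rw [htrA]
      exact Matrix.isHermitian_mul_mul_conjTranspose _
        (Matrix.isHermitian_diagonal_of_self_adjoint _
          (funext fun k => by simp [Complex.conj_ofReal]))
    refine vnEntropy_eq hherm _ ?_
    rw [htrA, charpoly_conj _ _ _ hW, MDAux.charpoly_diagonal]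
  rw [mutualInfo, mutualInfo, htrB, hvntrA, hvnρ', condEnt, measCondEnt]
  ring
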